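/- Suppose there exists a probability distribution H over functions from S_n to a finite set Y that Δ-approximates (S_n, S^C). Then there exists a probability distribution H' over functions from S_n to a finite set that Δ-approximates (S_n, S^C) and whose collision kernel P_{H'}(π,σ) = Pr_{h'∼H'}[h'(π)=h'(σ)] is bi-invariant, i.e., P_{H'}(τ₁πτ₂, τ₁στ₂) = P_{H'}(π,σ) for all π,σ,τ₁,τ₂ ∈ S_n. -/

import Mathlib

open scoped Classical
open Finset

noncomputable section

/-- The number of cycles of a permutation, counting fixed points as cycles of length 1
(so that the identity of `Fin n` has `n` cycles). -/
def cycleCount {n : ℕ} (π : Equiv.Perm (Fin n)) : ℕ :=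
  π.cycleType.card + (n - π.support.card)

/-- The (normalized) Cayley similarity `S^C(π,σ) = c(πσ⁻¹)/n`. -/
def cayleySim {n : ℕ} (π σ : Equiv.Perm (Fin n)) : ℝ := (cycleCount (π * σ⁻¹) : ℝ) / n

def collProb {X Y : Type*} [Fintype X] [Fintype Y] (w : (X → Y) → ℝ) (x₁ x₂ : X) : ℝ :=
  ∑ h : X → Y, if h x₁ = h x₂ then w h else 0

def IsDist {α : Type*} [Fintype α] (w : α → ℝ) : Prop :=
  (∀ a, 0 ≤ w a) ∧ ∑ a, w a = 1


lemma sum_fintype_congr {α : Type*} (i1 i2 : Fintype α) (f : α → ℝ) :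
    @Finset.sum α ℝ _ (@Finset.univ α i1) f = @Finset.sum α ℝ _ (@Finset.univ α i2) f := by
  rw [Subsingleton.elim i1 i2]

lemma collProb_eq {n : ℕ} {Y : Type} [Fintype Y]
    (w : (Equiv.Perm (Fin n) → Y) → ℝ) (π σ : Equiv.Perm (Fin n)) :
    collProb w π σ = ∑ h : Equiv.Perm (Fin n) → Y, if h π = h σ then w h else 0 := by
  unfold collProb
  exact sum_fintype_congr _ _ _

lemma cayleySim_biinv {n : ℕ} (π σ τ₁ τ₂ : Equiv.Perm (Fin n)) :
    cayleySim (τ₁ * π * τ₂) (τ₁ * σ * τ₂) = cayleySim π σ := by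
  have h : (τ₁ * π * τ₂) * (τ₁ * σ * τ₂)⁻¹ = τ₁ * (π * σ⁻¹) * τ₁⁻¹ := by
    group
  unfold cayleySim cycleCount
  rw [h, Equiv.Perm.cycleType_conj, Equiv.Perm.card_support_conj]

/-- Precomposition with `x ↦ τ₁⁻¹ * x * τ₂⁻¹`, as an equivalence on hash functions. -/
def biEquiv {n : ℕ} (Y : Type) (τ₁ τ₂ : Equiv.Perm (Fin n)) :
    (Equiv.Perm (Fin n) → Y) ≃ (Equiv.Perm (Fin n) → Y) :=
  Equiv.arrowCongr ((Equiv.mulLeft τ₁⁻¹).trans (Equiv.mulRight τ₂⁻¹)) (Equiv.refl Y)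

lemma biEquiv_apply {n : ℕ} {Y : Type} (τ₁ τ₂ : Equiv.Perm (Fin n))
    (h : Equiv.Perm (Fin n) → Y) (x : Equiv.Perm (Fin n)) :
    biEquiv Y τ₁ τ₂ h x = h (τ₁ * x * τ₂) := by
  simp [biEquiv, Equiv.arrowCongr, mul_assoc]

lemma biEquiv_comp {n : ℕ} {Y : Type} (τ₁ τ₂ : Equiv.Perm (Fin n))
    (h : Equiv.Perm (Fin n) → Y) :
    (fun x => biEquiv Y τ₁ τ₂ h (τ₁⁻¹ * x * τ₂⁻¹)) = h := by
  funext x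
  rw [biEquiv_apply]
  congr 1
  group

lemma collProb_comp {n : ℕ} {Y : Type} [Fintype Y]
    (w : (Equiv.Perm (Fin n) → Y) → ℝ) (π σ τ₁ τ₂ : Equiv.Perm (Fin n)) :
    (∑ g : Equiv.Perm (Fin n) → Y,
        if g π = g σ then w (fun x => g (τ₁⁻¹ * x * τ₂⁻¹)) else 0)
      = collProb w (τ₁ * π * τ₂) (τ₁ * σ * τ₂) := by
  calc (∑ g : Equiv.Perm (Fin n) → Y,
          if g π = g σ then w (fun x => g (τ₁⁻¹ * x * τ₂⁻¹)) else 0)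
      = ∑ h : Equiv.Perm (Fin n) → Y,
          (if biEquiv Y τ₁ τ₂ h π = biEquiv Y τ₁ τ₂ h σ
            then w (fun x => biEquiv Y τ₁ τ₂ h (τ₁⁻¹ * x * τ₂⁻¹)) else 0) :=
        (Equiv.sum_comp (biEquiv Y τ₁ τ₂)
          (fun g => if g π = g σ then w (fun x => g (τ₁⁻¹ * x * τ₂⁻¹)) else 0)).symm
    _ = ∑ h : Equiv.Perm (Fin n) → Y,
          (if h (τ₁ * π * τ₂) = h (τ₁ * σ * τ₂) then w h else 0) :=
        Finset.sum_congr rfl fun h _ => by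
          have hh : (fun x => h (τ₁ * (τ₁⁻¹ * x * τ₂⁻¹) * τ₂)) = h := by
            funext x; congr 1; group
          simp only [biEquiv_apply]
          rw [hh]
    _ = collProb w (τ₁ * π * τ₂) (τ₁ * σ * τ₂) := (collProb_eq w _ _).symm

lemma sum_biEquiv {n : ℕ} {Y : Type} [Fintype Y]
    (w : (Equiv.Perm (Fin n) → Y) → ℝ) (τ₁ τ₂ : Equiv.Perm (Fin n)) :
    (∑ g : Equiv.Perm (Fin n) → Y, w (fun x => g (τ₁⁻¹ * x * τ₂⁻¹)))
      = ∑ g : Equiv.Perm (Fin n) → Y, w g :=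
  calc (∑ g : Equiv.Perm (Fin n) → Y, w (fun x => g (τ₁⁻¹ * x * τ₂⁻¹)))
      = ∑ h : Equiv.Perm (Fin n) → Y,
          w (fun x => biEquiv Y τ₁ τ₂ h (τ₁⁻¹ * x * τ₂⁻¹)) :=
        (Equiv.sum_comp (biEquiv Y τ₁ τ₂)
          (fun g => w (fun x => g (τ₁⁻¹ * x * τ₂⁻¹)))).symm
    _ = ∑ g : Equiv.Perm (Fin n) → Y, w g :=
        Finset.sum_congr rfl fun h _ => by rw [biEquiv_comp]

/-- The averaged (bi-invariant) distribution. -/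
def avgW {n : ℕ} {Y : Type} [Fintype Y] (w : (Equiv.Perm (Fin n) → Y) → ℝ) :
    (Equiv.Perm (Fin n) → Y) → ℝ :=
  fun g => ((Fintype.card (Equiv.Perm (Fin n)) : ℝ))⁻¹ *
      ((Fintype.card (Equiv.Perm (Fin n)) : ℝ))⁻¹ *
    ∑ τ₁ : Equiv.Perm (Fin n), ∑ τ₂ : Equiv.Perm (Fin n),
      w (fun x => g (τ₁⁻¹ * x * τ₂⁻¹))

lemma collProb_avgW {n : ℕ} {Y : Type} [Fintype Y]
    (w : (Equiv.Perm (Fin n) → Y) → ℝ) (π σ : Equiv.Perm (Fin n)) :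
    collProb (avgW w) π σ
      = ((Fintype.card (Equiv.Perm (Fin n)) : ℝ))⁻¹ *
          ((Fintype.card (Equiv.Perm (Fin n)) : ℝ))⁻¹ *
        ∑ τ₁ : Equiv.Perm (Fin n), ∑ τ₂ : Equiv.Perm (Fin n),
          collProb w (τ₁ * π * τ₂) (τ₁ * σ * τ₂) := by
  set c : ℝ := ((Fintype.card (Equiv.Perm (Fin n)) : ℝ))⁻¹ *
      ((Fintype.card (Equiv.Perm (Fin n)) : ℝ))⁻¹ with hc
  calc collProb (avgW w) π σ
      = ∑ g : Equiv.Perm (Fin n) → Y,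
          (if g π = g σ then avgW w g else 0) := collProb_eq (avgW w) π σ
    _ = ∑ g : Equiv.Perm (Fin n) → Y, c * ∑ τ₁ : Equiv.Perm (Fin n),
          ∑ τ₂ : Equiv.Perm (Fin n),
          (if g π = g σ then w (fun x => g (τ₁⁻¹ * x * τ₂⁻¹)) else 0) :=
        Finset.sum_congr rfl fun g _ => by
          by_cases h : g π = g σ <;> simp [h, avgW, hc]
    _ = c * ∑ g : Equiv.Perm (Fin n) → Y, ∑ τ₁ : Equiv.Perm (Fin n),
          ∑ τ₂ : Equiv.Perm (Fin n),
          (if g π = g σ then w (fun x => g (τ₁⁻¹ * x * τ₂⁻¹)) else 0) :=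
        (Finset.mul_sum _ _ _).symm
    _ = c * ∑ τ₁ : Equiv.Perm (Fin n), ∑ g : Equiv.Perm (Fin n) → Y,
          ∑ τ₂ : Equiv.Perm (Fin n),
          (if g π = g σ then w (fun x => g (τ₁⁻¹ * x * τ₂⁻¹)) else 0) :=
        congrArg _ (Finset.sum_comm)
    _ = c * ∑ τ₁ : Equiv.Perm (Fin n), ∑ τ₂ : Equiv.Perm (Fin n),
          ∑ g : Equiv.Perm (Fin n) → Y,
          (if g π = g σ then w (fun x => g (τ₁⁻¹ * x * τ₂⁻¹)) else 0) :=
        congrArg _ (Finset.sum_congr rfl fun τ₁ _ => Finset.sum_comm)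
    _ = c * ∑ τ₁ : Equiv.Perm (Fin n), ∑ τ₂ : Equiv.Perm (Fin n),
          collProb w (τ₁ * π * τ₂) (τ₁ * σ * τ₂) :=
        congrArg _ (Finset.sum_congr rfl fun τ₁ _ =>
          Finset.sum_congr rfl fun τ₂ _ => collProb_comp w π σ τ₁ τ₂)

/-- If some distribution `Δ`-approximates the Cayley similarity, then there is a `Δ`-approximating
distribution whose collision kernel is bi-invariant. -/
theorem exists_biinvariant_approx (n : ℕ) (Δ : ℝ)
    (Y : Type) [Fintype Y] (w : (Equiv.Perm (Fin n) → Y) → ℝ) (hw : IsDist w)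
    (happrox : ∀ π σ : Equiv.Perm (Fin n),
      cayleySim π σ / Δ ≤ collProb w π σ ∧ collProb w π σ ≤ cayleySim π σ) :
    ∃ (Y' : Type) (_ : Fintype Y') (w' : (Equiv.Perm (Fin n) → Y') → ℝ),
      IsDist w' ∧
      (∀ π σ : Equiv.Perm (Fin n),
        cayleySim π σ / Δ ≤ collProb w' π σ ∧ collProb w' π σ ≤ cayleySim π σ) ∧
      (∀ π σ τ₁ τ₂ : Equiv.Perm (Fin n),
        collProb w' (τ₁ * π * τ₂) (τ₁ * σ * τ₂) = collProb w' π σ) := by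
  set N : ℝ := (Fintype.card (Equiv.Perm (Fin n)) : ℝ) with hN
  have hNpos : 0 < N := by positivity
  have hcpos : 0 < N⁻¹ * N⁻¹ := by positivity
  refine ⟨Y, inferInstance, avgW w, ⟨?_, ?_⟩, ?_, ?_⟩
  · -- nonneg
    intro g
    apply mul_nonneg hcpos.le
    exact Finset.sum_nonneg fun τ₁ _ => Finset.sum_nonneg fun τ₂ _ => hw.1 _
  · -- sums to 1
    have hswap : ∑ g : Equiv.Perm (Fin n) → Y, avgW w g
        = N⁻¹ * N⁻¹ * ∑ τ₁ : Equiv.Perm (Fin n), ∑ τ₂ : Equiv.Perm (Fin n),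
            ∑ g : Equiv.Perm (Fin n) → Y, w (fun x => g (τ₁⁻¹ * x * τ₂⁻¹)) :=
      calc ∑ g : Equiv.Perm (Fin n) → Y, avgW w g
          = N⁻¹ * N⁻¹ * ∑ g : Equiv.Perm (Fin n) → Y,
              ∑ τ₁ : Equiv.Perm (Fin n), ∑ τ₂ : Equiv.Perm (Fin n),
                w (fun x => g (τ₁⁻¹ * x * τ₂⁻¹)) := (Finset.mul_sum _ _ _).symm
        _ = N⁻¹ * N⁻¹ * ∑ τ₁ : Equiv.Perm (Fin n), ∑ g : Equiv.Perm (Fin n) → Y,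
              ∑ τ₂ : Equiv.Perm (Fin n), w (fun x => g (τ₁⁻¹ * x * τ₂⁻¹)) :=
            congrArg _ (Finset.sum_comm)
        _ = N⁻¹ * N⁻¹ * ∑ τ₁ : Equiv.Perm (Fin n), ∑ τ₂ : Equiv.Perm (Fin n),
              ∑ g : Equiv.Perm (Fin n) → Y, w (fun x => g (τ₁⁻¹ * x * τ₂⁻¹)) :=
            congrArg _ (Finset.sum_congr rfl fun τ₁ _ => Finset.sum_comm)
    rw [hswap]
    have hsum : ∀ τ₁ τ₂ : Equiv.Perm (Fin n),
        ∑ g : Equiv.Perm (Fin n) → Y, w (fun x => g (τ₁⁻¹ * x * τ₂⁻¹)) = 1 := by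
      intro τ₁ τ₂
      rw [sum_biEquiv w τ₁ τ₂, hw.2]
    simp only [hsum, Finset.sum_const, Finset.card_univ, nsmul_eq_mul, mul_one]
    rw [← hN]
    field_simp
  · -- approximation bounds
    intro π σ
    have havg : ∀ r : ℝ, N⁻¹ * N⁻¹ *
        ∑ _τ₁ : Equiv.Perm (Fin n), ∑ _τ₂ : Equiv.Perm (Fin n), r = r := by
      intro r
      simp only [Finset.sum_const, Finset.card_univ, nsmul_eq_mul, ← hN]
      field_simp
    rw [collProb_avgW, ← hN]
    constructor
    · calc cayleySim π σ / Δ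
          = N⁻¹ * N⁻¹ * ∑ _τ₁ : Equiv.Perm (Fin n), ∑ _τ₂ : Equiv.Perm (Fin n),
              (cayleySim π σ / Δ) := (havg _).symm
        _ ≤ _ := by
            apply mul_le_mul_of_nonneg_left _ hcpos.le
            refine Finset.sum_le_sum fun τ₁ _ => Finset.sum_le_sum fun τ₂ _ => ?_
            rw [← cayleySim_biinv π σ τ₁ τ₂]
            exact (happrox _ _).1
    · calc N⁻¹ * N⁻¹ * ∑ τ₁ : Equiv.Perm (Fin n), ∑ τ₂ : Equiv.Perm (Fin n),
              collProb w (τ₁ * π * τ₂) (τ₁ * σ * τ₂)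
          ≤ N⁻¹ * N⁻¹ * ∑ _τ₁ : Equiv.Perm (Fin n), ∑ _τ₂ : Equiv.Perm (Fin n),
              cayleySim π σ := by
            apply mul_le_mul_of_nonneg_left _ hcpos.le
            refine Finset.sum_le_sum fun τ₁ _ => Finset.sum_le_sum fun τ₂ _ => ?_
            rw [← cayleySim_biinv π σ τ₁ τ₂]
            exact (happrox _ _).2
        _ = cayleySim π σ := havg _
  · -- bi-invariance
    intro π σ a b
    rw [collProb_avgW, collProb_avgW]
    congr 1
    calc ∑ τ₁ : Equiv.Perm (Fin n), ∑ τ₂ : Equiv.Perm (Fin n),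
            collProb w (τ₁ * (a * π * b) * τ₂) (τ₁ * (a * σ * b) * τ₂)
        = ∑ τ₁ : Equiv.Perm (Fin n), ∑ τ₂ : Equiv.Perm (Fin n),
            collProb w ((Equiv.mulRight a τ₁) * π * (Equiv.mulLeft b τ₂))
              ((Equiv.mulRight a τ₁) * σ * (Equiv.mulLeft b τ₂)) := by
          refine Finset.sum_congr rfl fun τ₁ _ => Finset.sum_congr rfl fun τ₂ _ => ?_
          simp only [Equiv.coe_mulRight, Equiv.coe_mulLeft]
          congr 1
      _ = ∑ τ₁ : Equiv.Perm (Fin n), ∑ τ₂ : Equiv.Perm (Fin n),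
            collProb w ((Equiv.mulRight a τ₁) * π * τ₂)
              ((Equiv.mulRight a τ₁) * σ * τ₂) :=
          Finset.sum_congr rfl fun τ₁ _ => Equiv.sum_comp (Equiv.mulLeft b)
            (fun τ₂ => collProb w ((Equiv.mulRight a τ₁) * π * τ₂)
              ((Equiv.mulRight a τ₁) * σ * τ₂))
      _ = ∑ τ₁ : Equiv.Perm (Fin n), ∑ τ₂ : Equiv.Perm (Fin n),
            collProb w (τ₁ * π * τ₂) (τ₁ * σ * τ₂) :=
          Equiv.sum_comp (Equiv.mulRight a)
            (fun τ₁ => ∑ τ₂ : Equiv.Perm (Fin n),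
              collProb w (τ₁ * π * τ₂) (τ₁ * σ * τ₂))
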